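/- Let 2 < p < ∞ and let (ω_n) be a sequence in L^1(ℝ²) ∩ L^p(ℝ²), bounded in both norms, converging strongly to ω in L^2(ℝ²). Then |ω_n|^{p-2} → |ω|^{p-2} strongly in L^{(p-1)/(p-2)}(ℝ²), and if additionally ω_n ⇀ ω weakly in L^{p-1}(ℝ²), then ω_n|ω_n|^{p-2} ⇀ ω|ω|^{p-2} weakly in L^{p/(p-1)}(ℝ²) (i.e., ∫ ω_n|ω_n|^{p-2} φ dx → ∫ ω|ω|^{p-2} φ dx for all φ ∈ L^p(ℝ²)). -/

import Mathlib

open MeasureTheory Filter Topology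
open scoped ENNReal NNReal

section helpers
variable {X : Type*} [MeasurableSpace X] {μ : Measure X}

lemma WLI.ofReal_holder {a b c : ℝ} (ha : 0 < a) (hb : 0 < b) (hc : 0 < c)
    (h : 1/a = 1/b + 1/c) :
    1 / ENNReal.ofReal a = 1 / ENNReal.ofReal b + 1 / ENNReal.ofReal c := by
  rw [one_div, one_div, one_div, ← ENNReal.ofReal_inv_of_pos ha, ← ENNReal.ofReal_inv_of_pos hb,
    ← ENNReal.ofReal_inv_of_pos hc, ← ENNReal.ofReal_add (by positivity) (by positivity)]
  congr 1
  rw [← one_div, ← one_div, ← one_div, h]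

lemma WLI.holder_mul {f g : X → ℝ} (hf : AEStronglyMeasurable f μ) (hg : AEStronglyMeasurable g μ)
    {p q r : ℝ≥0∞} (hpqr : 1/p = 1/q + 1/r) :
    eLpNorm (fun x => f x * g x) p μ ≤ eLpNorm f q μ * eLpNorm g r μ := by
  haveI : ENNReal.HolderTriple q r p := ⟨by simpa [one_div] using hpqr.symm⟩
  simpa using eLpNorm_le_eLpNorm_mul_eLpNorm'_of_norm hf hg (· * ·) 1
    (Filter.Eventually.of_forall fun x => by simp [Real.norm_eq_abs, abs_mul])

lemma WLI.eLpNorm_abs_rpow (f : X → ℝ) {c r : ℝ} (hc : 0 < c) (hr : 0 ≤ r) :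
    eLpNorm (fun x => |f x| ^ c) (ENNReal.ofReal r) μ
      = eLpNorm f (ENNReal.ofReal (r * c)) μ ^ c := by
  have h := eLpNorm_norm_rpow f hc (p := ENNReal.ofReal r) (μ := μ)
  simp only [Real.norm_eq_abs] at h
  rw [h, ← ENNReal.ofReal_mul hr]

lemma WLI.aesm_abs_rpow {f : X → ℝ} (hf : AEStronglyMeasurable f μ) {c : ℝ} (hc : 0 < c) :
    AEStronglyMeasurable (fun x => |f x| ^ c) μ := by
  have hcont : Continuous fun t : ℝ => t ^ c :=
    continuous_iff_continuousAt.2 fun t => Real.continuousAt_rpow_const t c (Or.inr hc.le)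
  exact (hcont.comp_aestronglyMeasurable hf.norm).congr
    (Filter.Eventually.of_forall fun x => by simp [Real.norm_eq_abs])


lemma WLI.eLpNorm_interp {f : X → ℝ} (hf : AEStronglyMeasurable f μ) {r s q a b : ℝ}
    (hr : 0 < r) (hs : 0 < s) (ha : 0 < a) (hb : 0 < b) (hab : a + b = q)
    (hrs : a / r + b / s = 1) :
    eLpNorm f (ENNReal.ofReal q) μ
      ≤ eLpNorm f (ENNReal.ofReal r) μ ^ (a / q) * eLpNorm f (ENNReal.ofReal s) μ ^ (b / q) := by
  have hq : 0 < q := by linarith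
  have key : eLpNorm f (ENNReal.ofReal q) μ ^ q
      ≤ eLpNorm f (ENNReal.ofReal r) μ ^ a * eLpNorm f (ENNReal.ofReal s) μ ^ b := by
    have h1 : eLpNorm (fun x => |f x| ^ q) (ENNReal.ofReal 1) μ
        = eLpNorm f (ENNReal.ofReal q) μ ^ q := by
      rw [WLI.eLpNorm_abs_rpow f hq zero_le_one, one_mul]
    have hconj : (1 : ℝ≥0∞) / ENNReal.ofReal 1
        = 1 / ENNReal.ofReal (r / a) + 1 / ENNReal.ofReal (s / b) := by
      refine WLI.ofReal_holder one_pos (by positivity) (by positivity) ?_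
      rw [one_div_div, one_div_div, one_div_one]; exact hrs.symm
    have h2 : eLpNorm (fun x => |f x| ^ q) (ENNReal.ofReal 1) μ
        ≤ eLpNorm (fun x => |f x| ^ a) (ENNReal.ofReal (r / a)) μ
          * eLpNorm (fun x => |f x| ^ b) (ENNReal.ofReal (s / b)) μ := by
      have heq : (fun x => |f x| ^ q) = fun x => |f x| ^ a * |f x| ^ b := by
        funext x
        rw [← Real.rpow_add' (abs_nonneg _) (by rw [hab]; exact hq.ne'), hab]
      rw [heq]
      exact WLI.holder_mul (WLI.aesm_abs_rpow hf ha) (WLI.aesm_abs_rpow hf hb) hconj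
    have h3 : eLpNorm (fun x => |f x| ^ a) (ENNReal.ofReal (r / a)) μ
        = eLpNorm f (ENNReal.ofReal r) μ ^ a := by
      rw [WLI.eLpNorm_abs_rpow f ha (by positivity), div_mul_cancel₀ _ ha.ne']
    have h4 : eLpNorm (fun x => |f x| ^ b) (ENNReal.ofReal (s / b)) μ
        = eLpNorm f (ENNReal.ofReal s) μ ^ b := by
      rw [WLI.eLpNorm_abs_rpow f hb (by positivity), div_mul_cancel₀ _ hb.ne']
    rw [← h1, ← h3, ← h4]; exact h2
  have := ENNReal.rpow_le_rpow key (by positivity : (0:ℝ) ≤ 1 / q)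
  rwa [← ENNReal.rpow_mul, mul_one_div, div_self hq.ne', ENNReal.rpow_one,
    ENNReal.mul_rpow_of_nonneg _ _ (by positivity : (0:ℝ) ≤ 1 / q),
    ← ENNReal.rpow_mul, ← ENNReal.rpow_mul, mul_one_div, mul_one_div] at this

lemma WLI.rpow_tendsto0 {v : ℕ → ℝ≥0∞} {c : ℝ} (hc : 0 < c)
    (hv : Tendsto v atTop (𝓝 0)) : Tendsto (fun n => v n ^ c) atTop (𝓝 0) := by
  rw [ENNReal.tendsto_nhds_zero] at hv ⊢
  intro ε hε
  have hne : ε ^ (1 / c) ≠ 0 := fun h => by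
    rcases ENNReal.rpow_eq_zero_iff.1 h with ⟨h1, _⟩ | ⟨_, h2⟩
    · exact hε.ne' h1
    · have : (0:ℝ) < 1 / c := by positivity
      linarith
  filter_upwards [hv (ε ^ (1 / c)) (pos_iff_ne_zero.2 hne)] with n hn
  calc v n ^ c ≤ (ε ^ (1 / c)) ^ c := ENNReal.rpow_le_rpow hn hc.le
    _ = ε := by rw [← ENNReal.rpow_mul, one_div_mul_cancel hc.ne', ENNReal.rpow_one]

lemma WLI.squeeze0 {u v : ℕ → ℝ≥0∞} {M : ℝ≥0∞} (hM : M ≠ ⊤) (h : ∀ n, u n ≤ M * v n)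
    (hv : Tendsto v atTop (𝓝 0)) : Tendsto u atTop (𝓝 0) := by
  have h2 : Tendsto (fun n => M * v n) atTop (𝓝 0) := by
    have := ENNReal.Tendsto.const_mul hv (Or.inr hM)
    simpa using this
  exact tendsto_of_tendsto_of_tendsto_of_le_of_le tendsto_const_nhds h2 (fun n => zero_le) h

lemma WLI.tendsto_interp {g : ℕ → X → ℝ} (hg : ∀ n, AEStronglyMeasurable (g n) μ)
    {r s q a b : ℝ} (hr : 0 < r) (hs : 0 < s) (ha : 0 < a) (hb : 0 < b) (hab : a + b = q)
    (hrs : a / r + b / s = 1) {B : ℝ≥0∞} (hB : B ≠ ⊤)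
    (hbound : ∀ n, eLpNorm (g n) (ENNReal.ofReal r) μ ≤ B)
    (hts : Tendsto (fun n => eLpNorm (g n) (ENNReal.ofReal s) μ) atTop (𝓝 0)) :
    Tendsto (fun n => eLpNorm (g n) (ENNReal.ofReal q) μ) atTop (𝓝 0) := by
  have hq : 0 < q := by linarith
  refine WLI.squeeze0 (M := B ^ (a / q))
    (v := fun n => eLpNorm (g n) (ENNReal.ofReal s) μ ^ (b / q)) (ENNReal.rpow_ne_top_of_nonneg (by positivity) hB)
    (fun n => ?_) (WLI.rpow_tendsto0 (by positivity) hts)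
  exact (WLI.eLpNorm_interp (hg n) hr hs ha hb hab hrs).trans
    (mul_le_mul_left (ENNReal.rpow_le_rpow (hbound n) (by positivity)) _)

end helpers


lemma WLI.real_rpow_add_le {u x α : ℝ} (hu : 0 ≤ u) (hx : 0 ≤ x) (h0 : 0 ≤ α) (h1 : α ≤ 1) :
    (u + x) ^ α ≤ u ^ α + x ^ α := by
  have h := NNReal.rpow_add_le_add_rpow u.toNNReal x.toNNReal h0 h1
  have := NNReal.coe_le_coe.2 h
  push_cast [NNReal.coe_rpow] at this
  rwa [Real.coe_toNNReal _ hu, Real.coe_toNNReal _ hx] at this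

lemma WLI.abs_rpow_sub_small {a b α : ℝ} (hα0 : 0 < α) (hα : α ≤ 1) :
    abs (|a| ^ α - |b| ^ α) ≤ |a - b| ^ α := by
  wlog h : |b| ≤ |a| generalizing a b
  · rw [abs_sub_comm, abs_sub_comm a b]
    exact this (le_of_not_ge h)
  have h1 : |a| ^ α ≤ (|a| - |b|) ^ α + |b| ^ α := by
    have := WLI.real_rpow_add_le (sub_nonneg.2 h) (abs_nonneg b) hα0.le hα
    rwa [sub_add_cancel] at this
  have h2 : |b| ^ α ≤ |a| ^ α := Real.rpow_le_rpow (abs_nonneg b) h hα0.le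
  rw [abs_of_nonneg (sub_nonneg.2 h2)]
  have h3 : (|a| - |b|) ^ α ≤ |a - b| ^ α :=
    Real.rpow_le_rpow (sub_nonneg.2 h) (abs_sub_abs_le_abs_sub a b) hα0.le
  linarith

lemma WLI.rpow_mvt {b a α : ℝ} (hb : 0 ≤ b) (hba : b ≤ a) (hα : 1 ≤ α) :
    a ^ α - b ^ α ≤ α * a ^ (α - 1) * (a - b) := by
  rcases eq_or_lt_of_le hba with rfl | hlt
  · simp
  have hα0 : (0:ℝ) < α := lt_of_lt_of_le one_pos hα
  have hcont : ContinuousOn (fun x : ℝ => x ^ α) (Set.Icc b a) := fun x _ =>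
    (Real.continuousAt_rpow_const x α (Or.inr hα0.le)).continuousWithinAt
  have hderiv : ∀ x ∈ Set.Ioo b a, HasDerivAt (fun x : ℝ => x ^ α) (α * x ^ (α - 1)) x :=
    fun x _ => Real.hasDerivAt_rpow_const (Or.inr hα)
  obtain ⟨c, hc, hceq⟩ := exists_hasDerivAt_eq_slope _ _ hlt hcont hderiv
  have hc0 : 0 ≤ c := le_trans hb hc.1.le
  have hle : c ^ (α - 1) ≤ a ^ (α - 1) := Real.rpow_le_rpow hc0 hc.2.le (by linarith)
  have hab : 0 < a - b := sub_pos.2 hlt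
  have : a ^ α - b ^ α = α * c ^ (α - 1) * (a - b) := by
    field_simp at hceq
    linarith [hceq]
  rw [this]
  have : α * c ^ (α - 1) ≤ α * a ^ (α - 1) := by nlinarith
  nlinarith

lemma WLI.abs_rpow_sub_big {a b α : ℝ} (hα : 1 ≤ α) :
    abs (|a| ^ α - |b| ^ α) ≤ α * ((|a| ^ (α - 1) + |b| ^ (α - 1)) * |a - b|) := by
  wlog h : |b| ≤ |a| generalizing a b
  · rw [abs_sub_comm, abs_sub_comm a b, add_comm (|a| ^ (α-1))]
    exact this (le_of_not_ge h)
  have hα0 : (0:ℝ) < α := lt_of_lt_of_le one_pos hα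
  have h2 : |b| ^ α ≤ |a| ^ α := Real.rpow_le_rpow (abs_nonneg b) h hα0.le
  rw [abs_of_nonneg (sub_nonneg.2 h2)]
  have h1 := WLI.rpow_mvt (abs_nonneg b) h hα
  have h3 : |a| - |b| ≤ |a - b| := abs_sub_abs_le_abs_sub a b
  have h4 : (0:ℝ) ≤ |a| ^ (α - 1) := Real.rpow_nonneg (abs_nonneg a) _
  have h5 : (0:ℝ) ≤ |b| ^ (α - 1) := Real.rpow_nonneg (abs_nonneg b) _
  have h6 : (0:ℝ) ≤ |a - b| := abs_nonneg _
  nlinarith [mul_le_mul_of_nonneg_left h3 (mul_nonneg hα0.le h4),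
    mul_nonneg (mul_nonneg hα0.le h5) h6]


theorem weak_limit_identification
    (p : ℝ) (hp : 2 < p)
    (ωn : ℕ → EuclideanSpace ℝ (Fin 2) → ℝ) (ω : EuclideanSpace ℝ (Fin 2) → ℝ)
    (hmem1 : ∀ n, MemLp (ωn n) 1 volume)
    (hmemp : ∀ n, MemLp (ωn n) (ENNReal.ofReal p) volume)
    (hω1 : MemLp ω 1 volume) (hωp : MemLp ω (ENNReal.ofReal p) volume)
    (C : ENNReal) (hC : C < ⊤)
    (hb1 : ∀ n, eLpNorm (ωn n) 1 volume ≤ C)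
    (hbp : ∀ n, eLpNorm (ωn n) (ENNReal.ofReal p) volume ≤ C)
    (hL2 : Tendsto (fun n => eLpNorm (ωn n - ω) 2 volume) atTop (𝓝 0)) :
    Tendsto (fun n => eLpNorm
        (fun x => |ωn n x| ^ (p - 2) - |ω x| ^ (p - 2))
        (ENNReal.ofReal ((p - 1) / (p - 2))) volume) atTop (𝓝 0) ∧
      ((∀ φ : EuclideanSpace ℝ (Fin 2) → ℝ,
          MemLp φ (ENNReal.ofReal ((p - 1) / (p - 2))) volume →
          Tendsto (fun n => ∫ x, ωn n x * φ x) atTop (𝓝 (∫ x, ω x * φ x))) →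
        ∀ φ : EuclideanSpace ℝ (Fin 2) → ℝ, MemLp φ (ENNReal.ofReal p) volume →
          Tendsto (fun n => ∫ x, ωn n x * |ωn n x| ^ (p - 2) * φ x) atTop
            (𝓝 (∫ x, ω x * |ω x| ^ (p - 2) * φ x))) := by
  have hp0 : (0:ℝ) < p := by linarith
  have hp2 : (0:ℝ) < p - 2 := by linarith
  have hq0 : (0:ℝ) < p - 1 := by linarith
  have hq0' : p - 1 ≠ 0 := hq0.ne'
  have hp0' : p ≠ 0 := hp0.ne'
  have hp2' : p - 2 ≠ 0 := hp2.ne'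
  have hab1 : 1/(p-1) + p*(p-2)/(p-1) = p - 1 := by field_simp; ring
  have hab2 : (1/(p-1))/1 + (p*(p-2)/(p-1))/p = 1 := by field_simp; ring
  set t : ℝ := (p - 1) / (p - 2) with ht_def
  have ht0 : 0 < t := by positivity
  have hm : ∀ n, AEStronglyMeasurable (ωn n) volume := fun n => (hmem1 n).1
  have hmω : AEStronglyMeasurable ω volume := hω1.1
  have hmd : ∀ n, AEStronglyMeasurable (fun x => ωn n x - ω x) volume :=
    fun n => (hm n).sub hmω
  have h2of : (2 : ℝ≥0∞) = ENNReal.ofReal 2 := by norm_num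
  have hL2' : Tendsto (fun n => eLpNorm (fun x => ωn n x - ω x) (ENNReal.ofReal 2) volume)
      atTop (𝓝 0) := by rw [← h2of]; exact hL2
  have hB1 : ∀ n, eLpNorm (fun x => ωn n x - ω x) (ENNReal.ofReal 1) volume
      ≤ C + eLpNorm ω 1 volume := fun n => by
    rw [ENNReal.ofReal_one]
    exact (eLpNorm_sub_le (hm n) hmω le_rfl).trans (add_le_add_left (hb1 n) _)
  have hBp : ∀ n, eLpNorm (fun x => ωn n x - ω x) (ENNReal.ofReal p) volume
      ≤ C + eLpNorm ω (ENNReal.ofReal p) volume := fun n =>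
    (eLpNorm_sub_le (hm n) hmω (ENNReal.one_le_ofReal.2 (by linarith))).trans
      (add_le_add_left (hbp n) _)
  have hB1top : C + eLpNorm ω 1 volume ≠ ⊤ := ENNReal.add_ne_top.2 ⟨hC.ne, hω1.2.ne⟩
  have hBptop : C + eLpNorm ω (ENNReal.ofReal p) volume ≠ ⊤ :=
    ENNReal.add_ne_top.2 ⟨hC.ne, hωp.2.ne⟩
  -- strong convergence in L^{p-1}
  have hconv : Tendsto (fun n => eLpNorm (fun x => ωn n x - ω x) (ENNReal.ofReal (p-1)) volume)
      atTop (𝓝 0) := by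
    rcases lt_trichotomy p 3 with h3 | h3 | h3
    · exact WLI.tendsto_interp hmd one_pos two_pos (a := 3 - p) (b := 2*(p-2))
        (by linarith) (by linarith) (by ring) (by field_simp; ring) hB1top hB1 hL2'
    · have : ENNReal.ofReal (p - 1) = ENNReal.ofReal 2 := by rw [h3]; norm_num
      rw [show (fun n => eLpNorm (fun x => ωn n x - ω x) (ENNReal.ofReal (p-1)) volume)
        = fun n => eLpNorm (fun x => ωn n x - ω x) (ENNReal.ofReal 2) volume by
          funext n; rw [this]]
      exact hL2'
    · have hp3 : (0:ℝ) < p - 3 := by linarith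
      exact WLI.tendsto_interp hmd hp0 two_pos (a := p*(p-3)/(p-2)) (b := 2/(p-2))
        (div_pos (mul_pos hp0 hp3) hp2) (div_pos two_pos hp2)
        (by field_simp; ring) (by field_simp; ring) hBptop hBp hL2'
  -- uniform L^{p-1} bounds
  set K : ℝ≥0∞ := C ^ ((1/(p-1))/(p-1)) * C ^ ((p*(p-2)/(p-1))/(p-1)) with hK_def
  have hKtop : K ≠ ⊤ := ENNReal.mul_ne_top
    (ENNReal.rpow_ne_top_of_nonneg (by positivity) hC.ne)
    (ENNReal.rpow_ne_top_of_nonneg (by positivity) hC.ne)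
  have hKn : ∀ n, eLpNorm (ωn n) (ENNReal.ofReal (p-1)) volume ≤ K := fun n => by
    refine (WLI.eLpNorm_interp (hm n) one_pos hp0 (a := 1/(p-1)) (b := p*(p-2)/(p-1))
      (div_pos one_pos hq0) (div_pos (mul_pos hp0 hp2) hq0) hab1 hab2).trans ?_
    rw [ENNReal.ofReal_one]
    exact mul_le_mul' (ENNReal.rpow_le_rpow (hb1 n) (by positivity))
      (ENNReal.rpow_le_rpow (hbp n) (by positivity))
  have hWfin : eLpNorm ω (ENNReal.ofReal (p-1)) volume ≠ ⊤ := by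
    have h := WLI.eLpNorm_interp (μ := volume) hmω one_pos hp0 (a := 1/(p-1))
      (b := p*(p-2)/(p-1)) (div_pos one_pos hq0) (div_pos (mul_pos hp0 hp2) hq0) hab1 hab2
    rw [ENNReal.ofReal_one] at h
    exact (h.trans_lt (ENNReal.mul_lt_top
      (ENNReal.rpow_lt_top_of_nonneg (by positivity) hω1.2.ne)
      (ENNReal.rpow_lt_top_of_nonneg (by positivity) hωp.2.ne))).ne
  set W : ℝ≥0∞ := eLpNorm ω (ENNReal.ofReal (p-1)) volume with hW_def
  have hWtop : W ≠ ⊤ := hWfin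
  -- Part 1
  have goal1 : Tendsto (fun n => eLpNorm
      (fun x => |ωn n x| ^ (p - 2) - |ω x| ^ (p - 2)) (ENNReal.ofReal t) volume)
      atTop (𝓝 0) := by
    rcases lt_trichotomy p 3 with h3 | h3 | h3
    · -- 2 < p < 3
      have hbd : ∀ n, eLpNorm (fun x => |ωn n x| ^ (p-2) - |ω x| ^ (p-2))
          (ENNReal.ofReal t) volume
          ≤ eLpNorm (fun x => ωn n x - ω x) (ENNReal.ofReal (p-1)) volume ^ (p-2) := by
        intro n
        have step : eLpNorm (fun x => |ωn n x| ^ (p-2) - |ω x| ^ (p-2))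
            (ENNReal.ofReal t) volume
            ≤ eLpNorm (fun x => |ωn n x - ω x| ^ (p-2)) (ENNReal.ofReal t) volume := by
          refine eLpNorm_mono_real fun x => ?_
          rw [Real.norm_eq_abs]
          exact WLI.abs_rpow_sub_small hp2 (by linarith)
        refine step.trans (le_of_eq ?_)
        rw [WLI.eLpNorm_abs_rpow (fun x => ωn n x - ω x) hp2 ht0.le]
        congr 2
        rw [ht_def, div_mul_cancel₀ _ hp2.ne']
      exact tendsto_of_tendsto_of_tendsto_of_le_of_le tendsto_const_nhds
        (WLI.rpow_tendsto0 hp2 hconv) (fun n => zero_le) hbd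
    · -- p = 3
      have hp21 : p - 2 = 1 := by linarith
      have htt : ENNReal.ofReal t = ENNReal.ofReal 2 := by
        rw [ht_def, h3]; norm_num
      simp_rw [hp21, Real.rpow_one, htt]
      refine tendsto_of_tendsto_of_tendsto_of_le_of_le tendsto_const_nhds hL2'
        (fun n => zero_le) (fun n => ?_)
      refine eLpNorm_mono fun x => ?_
      rw [Real.norm_eq_abs, Real.norm_eq_abs]
      exact abs_abs_sub_abs_le_abs_sub _ _
    · -- p > 3
      have hp3 : (0:ℝ) < p - 3 := by linarith
      have hu1 : (1:ℝ) ≤ (p-1)/(p-3) := by rw [le_div_iff₀ hp3]; linarith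
      have hMne : ENNReal.ofReal (p-2) * (K ^ (p-3) + W ^ (p-3)) ≠ ⊤ :=
        ENNReal.mul_ne_top ENNReal.ofReal_ne_top (ENNReal.add_ne_top.2
          ⟨ENNReal.rpow_ne_top_of_nonneg hp3.le hKtop,
           ENNReal.rpow_ne_top_of_nonneg hp3.le hWtop⟩)
      refine WLI.squeeze0 (M := ENNReal.ofReal (p-2) * (K ^ (p-3) + W ^ (p-3)))
        (v := fun n => eLpNorm (fun x => ωn n x - ω x) (ENNReal.ofReal (p-1)) volume)
        hMne (fun n => ?_) hconv
      have hmS : AEStronglyMeasurable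
          (fun x => (p-2) * (|ωn n x| ^ (p-3) + |ω x| ^ (p-3))) volume :=
        ((WLI.aesm_abs_rpow (hm n) hp3).add (WLI.aesm_abs_rpow hmω hp3)).const_mul _
      have step1 : eLpNorm (fun x => |ωn n x| ^ (p-2) - |ω x| ^ (p-2))
          (ENNReal.ofReal t) volume
          ≤ eLpNorm (fun x => ((p-2) * (|ωn n x| ^ (p-3) + |ω x| ^ (p-3)))
              * (ωn n x - ω x)) (ENNReal.ofReal t) volume := by
        refine eLpNorm_mono fun x => ?_
        rw [Real.norm_eq_abs, Real.norm_eq_abs]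
        have h := WLI.abs_rpow_sub_big (a := ωn n x) (b := ω x) (α := p-2) (by linarith)
        rw [show p - 2 - 1 = p - 3 by ring] at h
        calc abs (|ωn n x| ^ (p-2) - |ω x| ^ (p-2))
            ≤ (p-2) * ((|ωn n x| ^ (p-3) + |ω x| ^ (p-3)) * |ωn n x - ω x|) := h
          _ = abs (((p-2) * (|ωn n x| ^ (p-3) + |ω x| ^ (p-3))) * (ωn n x - ω x)) := by
              rw [abs_mul, abs_mul, abs_of_nonneg hp2.le, abs_of_nonneg
                (by positivity : (0:ℝ) ≤ |ωn n x| ^ (p-3) + |ω x| ^ (p-3))]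
              ring
      have hconj : (1:ℝ≥0∞) / ENNReal.ofReal t
          = 1 / ENNReal.ofReal ((p-1)/(p-3)) + 1 / ENNReal.ofReal (p-1) := by
        refine WLI.ofReal_holder ht0 (by positivity) hq0 ?_
        rw [ht_def]
        field_simp
        ring
      have step2 := WLI.holder_mul (μ := volume) hmS (hmd n) hconj
      have step3 : eLpNorm (fun x => (p-2) * (|ωn n x| ^ (p-3) + |ω x| ^ (p-3)))
          (ENNReal.ofReal ((p-1)/(p-3))) volume
          ≤ ENNReal.ofReal (p-2) * (K ^ (p-3) + W ^ (p-3)) := by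
        have hsmul : (fun x => (p-2) * (|ωn n x| ^ (p-3) + |ω x| ^ (p-3)))
            = (p-2) • (fun x => |ωn n x| ^ (p-3) + |ω x| ^ (p-3)) := rfl
        rw [hsmul]
        refine eLpNorm_const_smul_le.trans ?_
        refine mul_le_mul' (le_of_eq ?_) ?_
        · rw [← ofReal_norm, Real.norm_eq_abs, abs_of_nonneg hp2.le]
        · refine (eLpNorm_add_le (WLI.aesm_abs_rpow (hm n) hp3)
            (WLI.aesm_abs_rpow hmω hp3) (ENNReal.one_le_ofReal.2 hu1)).trans ?_
          have e1 : eLpNorm (fun x => |ωn n x| ^ (p-3)) (ENNReal.ofReal ((p-1)/(p-3)))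
              volume = eLpNorm (ωn n) (ENNReal.ofReal (p-1)) volume ^ (p-3) := by
            rw [WLI.eLpNorm_abs_rpow (ωn n) hp3 (by positivity)]
            congr 2
            rw [div_mul_cancel₀ _ hp3.ne']
          have e2 : eLpNorm (fun x => |ω x| ^ (p-3)) (ENNReal.ofReal ((p-1)/(p-3)))
              volume = W ^ (p-3) := by
            rw [WLI.eLpNorm_abs_rpow ω hp3 (by positivity), hW_def]
            congr 2
            rw [div_mul_cancel₀ _ hp3.ne']
          rw [e1, e2]
          exact add_le_add_left (ENNReal.rpow_le_rpow (hKn n) hp3.le) _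
      refine step1.trans (step2.trans ?_)
      exact mul_le_mul_left step3 _
  refine ⟨goal1, fun _ φ hφ => ?_⟩
  -- Part 2
  have habs : ∀ a : ℝ, |a * |a| ^ (p-2)| = |a| ^ (p-1) := fun a => by
    rw [abs_mul, abs_of_nonneg (Real.rpow_nonneg (abs_nonneg a) _),
      show p - 1 = 1 + (p-2) by ring,
      Real.rpow_add' (abs_nonneg a) (by linarith : (0:ℝ) < 1 + (p-2)).ne', Real.rpow_one]
  have hmfn : ∀ n, AEStronglyMeasurable (fun x => ωn n x * |ωn n x| ^ (p-2)) volume :=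
    fun n => (hm n).mul (WLI.aesm_abs_rpow (hm n) hp2)
  have hmf : AEStronglyMeasurable (fun x => ω x * |ω x| ^ (p-2)) volume :=
    hmω.mul (WLI.aesm_abs_rpow hmω hp2)
  set q' : ℝ≥0∞ := ENNReal.ofReal (p/(p-1)) with hq'_def
  have hq'1 : (1:ℝ) ≤ p/(p-1) := by rw [le_div_iff₀ hq0]; linarith
  have hconj2 : (1:ℝ≥0∞) / 1 = 1 / q' + 1 / ENNReal.ofReal p := by
    have h := WLI.ofReal_holder one_pos (by positivity : (0:ℝ) < p/(p-1)) hp0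
      (by field_simp; ring)
    rwa [ENNReal.ofReal_one] at h
  have hfnq : ∀ n, eLpNorm (fun x => ωn n x * |ωn n x| ^ (p-2)) q' volume ≤ C ^ (p-1) := by
    intro n
    have step : eLpNorm (fun x => ωn n x * |ωn n x| ^ (p-2)) q' volume
        ≤ eLpNorm (fun x => |ωn n x| ^ (p-1)) q' volume := by
      refine eLpNorm_mono fun x => ?_
      rw [Real.norm_eq_abs, Real.norm_eq_abs, habs (ωn n x),
        abs_of_nonneg (Real.rpow_nonneg (abs_nonneg _) _)]
    refine step.trans ?_
    rw [hq'_def, WLI.eLpNorm_abs_rpow (ωn n) hq0 (by positivity),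
      show p/(p-1) * (p-1) = p by field_simp]
    exact ENNReal.rpow_le_rpow (hbp n) hq0.le
  have hfq : eLpNorm (fun x => ω x * |ω x| ^ (p-2)) q' volume
      ≤ eLpNorm ω (ENNReal.ofReal p) volume ^ (p-1) := by
    have step : eLpNorm (fun x => ω x * |ω x| ^ (p-2)) q' volume
        ≤ eLpNorm (fun x => |ω x| ^ (p-1)) q' volume := by
      refine eLpNorm_mono fun x => ?_
      rw [Real.norm_eq_abs, Real.norm_eq_abs, habs (ω x),
        abs_of_nonneg (Real.rpow_nonneg (abs_nonneg _) _)]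
    refine step.trans ?_
    rw [hq'_def, WLI.eLpNorm_abs_rpow ω hq0 (by positivity),
      show p/(p-1) * (p-1) = p by field_simp]
  set D : ℝ≥0∞ := C ^ (p-1) + eLpNorm ω (ENNReal.ofReal p) volume ^ (p-1) with hD_def
  have hDtop : D ≠ ⊤ := ENNReal.add_ne_top.2 ⟨ENNReal.rpow_ne_top_of_nonneg hq0.le hC.ne,
    ENNReal.rpow_ne_top_of_nonneg hq0.le hωp.2.ne⟩
  have hDbd : ∀ n, eLpNorm (fun x => ωn n x * |ωn n x| ^ (p-2) - ω x * |ω x| ^ (p-2))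
      q' volume ≤ D := fun n =>
    (eLpNorm_sub_le (hmfn n) hmf (ENNReal.one_le_ofReal.2 hq'1)).trans
      (add_le_add (hfnq n) hfq)
  have hGmeas : ∀ n, AEStronglyMeasurable
      (fun x => |ωn n x| ^ (p-2) - |ω x| ^ (p-2)) volume :=
    fun n => (WLI.aesm_abs_rpow (hm n) hp2).sub (WLI.aesm_abs_rpow hmω hp2)
  have hconjA : (1:ℝ≥0∞) / 1 = 1 / ENNReal.ofReal (p-1) + 1 / ENNReal.ofReal t := by
    have h := WLI.ofReal_holder one_pos hq0 ht0 (by rw [ht_def]; field_simp; ring)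
    rwa [ENNReal.ofReal_one] at h
  have hW2 : eLpNorm (fun x => |ω x| ^ (p-2)) (ENNReal.ofReal t) volume = W ^ (p-2) := by
    rw [WLI.eLpNorm_abs_rpow ω hp2 ht0.le, hW_def]
    congr 2
    rw [ht_def, div_mul_cancel₀ _ hp2']
  have hW2top : W ^ (p-2) ≠ ⊤ := ENNReal.rpow_ne_top_of_nonneg hp2.le hWtop
  have hG1 : Tendsto (fun n => eLpNorm
      (fun x => ωn n x * |ωn n x| ^ (p-2) - ω x * |ω x| ^ (p-2)) 1 volume) atTop (𝓝 0) := by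
    have hbd : ∀ n, eLpNorm (fun x => ωn n x * |ωn n x| ^ (p-2) - ω x * |ω x| ^ (p-2))
        1 volume
        ≤ K * eLpNorm (fun x => |ωn n x| ^ (p-2) - |ω x| ^ (p-2)) (ENNReal.ofReal t) volume
          + eLpNorm (fun x => ωn n x - ω x) (ENNReal.ofReal (p-1)) volume * W ^ (p-2) := by
      intro n
      have heq : (fun x => ωn n x * |ωn n x| ^ (p-2) - ω x * |ω x| ^ (p-2))
          = fun x => ωn n x * (|ωn n x| ^ (p-2) - |ω x| ^ (p-2))
            + (ωn n x - ω x) * |ω x| ^ (p-2) := by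
        funext x; ring
      rw [heq]
      refine (eLpNorm_add_le ((hm n).mul (hGmeas n))
        ((hmd n).mul (WLI.aesm_abs_rpow hmω hp2)) le_rfl).trans ?_
      refine add_le_add ?_ ?_
      · exact (WLI.holder_mul (hm n) (hGmeas n) hconjA).trans
          (mul_le_mul_left (hKn n) _)
      · exact (WLI.holder_mul (hmd n) (WLI.aesm_abs_rpow hmω hp2) hconjA).trans
          (le_of_eq (by rw [hW2]))
    have t1 : Tendsto (fun n => K * eLpNorm
        (fun x => |ωn n x| ^ (p-2) - |ω x| ^ (p-2)) (ENNReal.ofReal t) volume)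
        atTop (𝓝 0) := by
      have h := ENNReal.Tendsto.const_mul goal1 (Or.inr hKtop)
      simpa using h
    have t2 : Tendsto (fun n => eLpNorm (fun x => ωn n x - ω x)
        (ENNReal.ofReal (p-1)) volume * W ^ (p-2)) atTop (𝓝 0) := by
      have h := ENNReal.Tendsto.mul_const hconv (Or.inr hW2top)
      simpa using h
    have h := t1.add t2
    rw [add_zero] at h
    exact tendsto_of_tendsto_of_tendsto_of_le_of_le tendsto_const_nhds h
      (fun n => zero_le) hbd
  have hCp : C ^ (p-1) ≠ ⊤ := ENNReal.rpow_ne_top_of_nonneg hq0.le hC.ne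
  have hint : ∀ n, Integrable (fun x => ωn n x * |ωn n x| ^ (p-2) * φ x) volume := by
    intro n
    rw [← memLp_one_iff_integrable]
    refine ⟨(hmfn n).mul hφ.1, ?_⟩
    calc eLpNorm (fun x => ωn n x * |ωn n x| ^ (p-2) * φ x) 1 volume
        ≤ eLpNorm (fun x => ωn n x * |ωn n x| ^ (p-2)) q' volume
          * eLpNorm φ (ENNReal.ofReal p) volume := WLI.holder_mul (hmfn n) hφ.1 hconj2
      _ < ⊤ := ENNReal.mul_lt_top ((hfnq n).trans_lt hCp.lt_top) hφ.2
  have hintf : Integrable (fun x => ω x * |ω x| ^ (p-2) * φ x) volume := by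
    rw [← memLp_one_iff_integrable]
    refine ⟨hmf.mul hφ.1, ?_⟩
    calc eLpNorm (fun x => ω x * |ω x| ^ (p-2) * φ x) 1 volume
        ≤ eLpNorm (fun x => ω x * |ω x| ^ (p-2)) q' volume
          * eLpNorm φ (ENNReal.ofReal p) volume := WLI.holder_mul hmf hφ.1 hconj2
      _ < ⊤ := ENNReal.mul_lt_top (hfq.trans_lt
          (ENNReal.rpow_ne_top_of_nonneg hq0.le hωp.2.ne).lt_top) hφ.2
  refine tendsto_integral_of_L1' _ hintf.1 (Filter.Eventually.of_forall hint) ?_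
  have hcongr : ∀ n, eLpNorm ((fun x => ωn n x * |ωn n x| ^ (p-2) * φ x)
      - fun x => ω x * |ω x| ^ (p-2) * φ x) 1 volume
      = eLpNorm (fun x => (ωn n x * |ωn n x| ^ (p-2) - ω x * |ω x| ^ (p-2)) * φ x)
        1 volume :=
    fun n => eLpNorm_congr_ae (Filter.Eventually.of_forall fun x => by
      simp only [Pi.sub_apply]; ring)
  simp only [hcongr]
  rw [ENNReal.tendsto_nhds_zero]
  intro ε hε
  have hε2 : ε / 2 ≠ 0 := (ENNReal.half_pos hε.ne').ne'
  set δ : ℝ≥0∞ := (ε/2) / (D + 1) with hδ_def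
  have hδ0 : δ ≠ 0 := by
    rw [hδ_def, Ne, ENNReal.div_eq_zero_iff]
    push_neg
    exact ⟨hε2, ENNReal.add_ne_top.2 ⟨hDtop, ENNReal.one_ne_top⟩⟩
  obtain ⟨ψ, hψlt, hψmem⟩ := hφ.exists_simpleFunc_eLpNorm_sub_lt ENNReal.ofReal_ne_top hδ0
  obtain ⟨R, hR⟩ := ψ.exists_forall_norm_le
  have hR' : ∀ x, ‖ψ x‖ ≤ max R 0 := fun x => (hR x).trans (le_max_left _ _)
  have hR0 : (0:ℝ) ≤ max R 0 := le_max_right _ _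
  have hden : ENNReal.ofReal (max R 0) + 1 ≠ ⊤ :=
    ENNReal.add_ne_top.2 ⟨ENNReal.ofReal_ne_top, ENNReal.one_ne_top⟩
  have hev : ∀ᶠ n in atTop, eLpNorm
      (fun x => ωn n x * |ωn n x| ^ (p-2) - ω x * |ω x| ^ (p-2)) 1 volume
      ≤ (ε/2) / (ENNReal.ofReal (max R 0) + 1) := by
    have hpos : (0:ℝ≥0∞) < (ε/2) / (ENNReal.ofReal (max R 0) + 1) := by
      rw [pos_iff_ne_zero, Ne, ENNReal.div_eq_zero_iff]
      push_neg
      exact ⟨hε2, hden⟩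
    exact (ENNReal.tendsto_nhds_zero.1 hG1) _ hpos
  filter_upwards [hev] with n hn
  have hmg : AEStronglyMeasurable
      (fun x => ωn n x * |ωn n x| ^ (p-2) - ω x * |ω x| ^ (p-2)) volume :=
    (hmfn n).sub hmf
  have hsplit : eLpNorm
      (fun x => (ωn n x * |ωn n x| ^ (p-2) - ω x * |ω x| ^ (p-2)) * φ x) 1 volume
      ≤ eLpNorm (fun x => (ωn n x * |ωn n x| ^ (p-2) - ω x * |ω x| ^ (p-2)) * ψ x) 1 volume
        + eLpNorm (fun x => (ωn n x * |ωn n x| ^ (p-2) - ω x * |ω x| ^ (p-2))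
            * (φ x - ψ x)) 1 volume := by
    have heq : (fun x => (ωn n x * |ωn n x| ^ (p-2) - ω x * |ω x| ^ (p-2)) * φ x)
        = fun x => (ωn n x * |ωn n x| ^ (p-2) - ω x * |ω x| ^ (p-2)) * ψ x
          + (ωn n x * |ωn n x| ^ (p-2) - ω x * |ω x| ^ (p-2)) * (φ x - ψ x) := by
      funext x; ring
    rw [heq]
    exact eLpNorm_add_le (hmg.mul ψ.aestronglyMeasurable)
      (hmg.mul (hφ.1.sub ψ.aestronglyMeasurable)) le_rfl
  have h1 : eLpNorm
      (fun x => (ωn n x * |ωn n x| ^ (p-2) - ω x * |ω x| ^ (p-2)) * ψ x) 1 volume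
      ≤ ENNReal.ofReal (max R 0) * eLpNorm
        (fun x => ωn n x * |ωn n x| ^ (p-2) - ω x * |ω x| ^ (p-2)) 1 volume := by
    have step : eLpNorm
        (fun x => (ωn n x * |ωn n x| ^ (p-2) - ω x * |ω x| ^ (p-2)) * ψ x) 1 volume
        ≤ eLpNorm (fun x => (max R 0)
          * ‖ωn n x * |ωn n x| ^ (p-2) - ω x * |ω x| ^ (p-2)‖) 1 volume := by
      refine eLpNorm_mono_real fun x => ?_
      rw [norm_mul]
      calc ‖ωn n x * |ωn n x| ^ (p-2) - ω x * |ω x| ^ (p-2)‖ * ‖ψ x‖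
          ≤ ‖ωn n x * |ωn n x| ^ (p-2) - ω x * |ω x| ^ (p-2)‖ * max R 0 :=
            mul_le_mul_of_nonneg_left (hR' x) (norm_nonneg _)
        _ = max R 0 * ‖ωn n x * |ωn n x| ^ (p-2) - ω x * |ω x| ^ (p-2)‖ := mul_comm _ _
    refine step.trans ?_
    rw [show (fun x => (max R 0)
        * ‖ωn n x * |ωn n x| ^ (p-2) - ω x * |ω x| ^ (p-2)‖)
        = (max R 0) • (fun x => ‖ωn n x * |ωn n x| ^ (p-2) - ω x * |ω x| ^ (p-2)‖)
        from rfl]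
    refine eLpNorm_const_smul_le.trans (le_of_eq ?_)
    rw [eLpNorm_norm, ← ofReal_norm,
      Real.norm_eq_abs, abs_of_nonneg hR0]
  have h2 : eLpNorm (fun x => (ωn n x * |ωn n x| ^ (p-2) - ω x * |ω x| ^ (p-2))
      * (φ x - ψ x)) 1 volume ≤ D * δ :=
    (WLI.holder_mul hmg (hφ.1.sub ψ.aestronglyMeasurable) hconj2).trans
      (mul_le_mul' (hDbd n) hψlt.le)
  calc eLpNorm (fun x => (ωn n x * |ωn n x| ^ (p-2) - ω x * |ω x| ^ (p-2)) * φ x) 1 volume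
      ≤ eLpNorm (fun x => (ωn n x * |ωn n x| ^ (p-2) - ω x * |ω x| ^ (p-2)) * ψ x) 1 volume
        + eLpNorm (fun x => (ωn n x * |ωn n x| ^ (p-2) - ω x * |ω x| ^ (p-2))
            * (φ x - ψ x)) 1 volume := hsplit
    _ ≤ ENNReal.ofReal (max R 0) * eLpNorm
          (fun x => ωn n x * |ωn n x| ^ (p-2) - ω x * |ω x| ^ (p-2)) 1 volume + D * δ :=
        add_le_add h1 h2
    _ ≤ (ENNReal.ofReal (max R 0) + 1) * ((ε/2) / (ENNReal.ofReal (max R 0) + 1))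
        + (D + 1) * δ :=
        add_le_add (mul_le_mul' le_self_add hn) (mul_le_mul' le_self_add le_rfl)
    _ ≤ ε/2 + ε/2 := by
        refine add_le_add ENNReal.mul_div_le ?_
        rw [hδ_def]
        exact ENNReal.mul_div_le
    _ = ε := ENNReal.add_halves ε
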